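/- Let (C_1, …, C_ℓ) be a finite indexed family of nonempty subsets of V, and for each i let T_i = {(μ_i→x) : x ∈ C_i, x ≠ μ_i} be a directed star spanning C_i with center μ_i ∈ C_i. Let D = ⋃_{i=1}^{ℓ} T_i. For each vertex o ∈ V let N_o = {i : μ_i = o}, and let P = {N_o : N_o ≠ ∅}. Then the nonempty groups N_o are hyperedges (they are nonempty index sets with o ∈ ⋂_{i∈N_o} C_i), P is a matching in which every index belongs to some hyperedge, and |D| = C_tot − Σ_{N∈P} c(N). -/

import Mathlib

open scoped Classical

/-- An arc set `A` satisfies the directed-star property for `S` if some `c ∈ S`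
has an arc `(c→x) ∈ A` to every other element of `S`. -/
def DiStarProp {V : Type*} (A : Finset (V × V)) (S : Finset V) : Prop :=
  ∃ c ∈ S, ∀ x ∈ S, x ≠ c → (c, x) ∈ A

/-- The intersection `⋂_{i∈H} C_i` of the communities indexed by `H`. -/
noncomputable def interC {V : Type*} [Fintype V] {ℓ : ℕ} (C : Fin ℓ → Finset V)
    (H : Finset (Fin ℓ)) : Finset V :=
  Finset.univ.filter (fun v => ∀ i ∈ H, v ∈ C i)

/-- The union `⋃_{i∈H} C_i` of the communities indexed by `H`. -/
def unionC {V : Type*} [DecidableEq V] {ℓ : ℕ} (C : Fin ℓ → Finset V)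
    (H : Finset (Fin ℓ)) : Finset V :=
  H.biUnion C

/-- A hyperedge is a nonempty set of indices whose communities have nonempty
common intersection. -/
def IsHyperedge {V : Type*} [Fintype V] {ℓ : ℕ} (C : Fin ℓ → Finset V)
    (H : Finset (Fin ℓ)) : Prop :=
  H.Nonempty ∧ (interC C H).Nonempty

/-- The score `c(H) = 1 − |H| + Σ_{v ∈ ⋃_{i∈H} C_i} (|{i ∈ H : v ∈ C_i}| − 1)`. -/
noncomputable def score {V : Type*} [Fintype V] [DecidableEq V] {ℓ : ℕ}
    (C : Fin ℓ → Finset V) (H : Finset (Fin ℓ)) : ℤ :=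
  1 - (H.card : ℤ) +
    ∑ v ∈ unionC C H, (((H.filter (fun i => v ∈ C i)).card : ℤ) - 1)

/-- A matching is a set of pairwise disjoint hyperedges. -/
def IsHyperMatching {V : Type*} [Fintype V] {ℓ : ℕ} (C : Fin ℓ → Finset V)
    (I : Finset (Finset (Fin ℓ))) : Prop :=
  (∀ H ∈ I, IsHyperedge C H) ∧ ∀ H ∈ I, ∀ H' ∈ I, H ≠ H' → Disjoint H H'

/-- Given directed stars `T_i` with centers `μ_i ∈ C_i` spanning the communities
`C_i`, grouping the indices by their common star center (`N_o = {i : μ_i = o}`)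
yields: each nonempty `N_o` is a hyperedge with `o ∈ ⋂_{i∈N_o} C_i`, the family
`P = {N_o : N_o ≠ ∅}` is a matching in which every index lies in some hyperedge,
and `|D| = C_tot − Σ_{N∈P} c(N)` where `D = ⋃ T_i`. -/
theorem directed_stars_to_matching
    {V : Type*} [Fintype V] [DecidableEq V]
    (ℓ : ℕ) (C : Fin ℓ → Finset V) (hC : ∀ i, (C i).Nonempty)
    (μ : Fin ℓ → V) (hμ : ∀ i, μ i ∈ C i)
    (T : Fin ℓ → Finset (V × V))
    (hT : ∀ i, T i = ((C i).erase (μ i)).image (fun x => (μ i, x)))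
    (D : Finset (V × V)) (hD : D = Finset.univ.biUnion T)
    (N : V → Finset (Fin ℓ))
    (hN : ∀ o : V, N o = Finset.univ.filter (fun i => μ i = o))
    (P : Finset (Finset (Fin ℓ)))
    (hP : P = (Finset.univ.image N).filter (fun A => A.Nonempty)) :
    (∀ o : V, (N o).Nonempty → IsHyperedge C (N o) ∧ o ∈ interC C (N o)) ∧
    IsHyperMatching C P ∧
    (∀ i : Fin ℓ, ∃ A ∈ P, i ∈ A) ∧
    (D.card : ℤ) = (∑ i : Fin ℓ, ((C i).card - 1 : ℤ)) - ∑ A ∈ P, score C A := by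

  classical
  -- basic membership facts
  have hmem : ∀ (o : V) (i : Fin ℓ), i ∈ N o ↔ μ i = o := by
    intro o i; rw [hN]; simp
  have hoint : ∀ o : V, o ∈ interC C (N o) := by
    intro o
    simp only [interC, Finset.mem_filter, Finset.mem_univ, true_and]
    intro i hi
    have := (hmem o i).mp hi
    rw [← this]; exact hμ i
  have h1 : ∀ o : V, (N o).Nonempty → IsHyperedge C (N o) ∧ o ∈ interC C (N o) := by
    intro o hne
    exact ⟨⟨hne, ⟨o, hoint o⟩⟩, hoint o⟩
  -- description of P
  have hPmem : ∀ A, A ∈ P ↔ ∃ o : V, (N o).Nonempty ∧ N o = A := by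
    intro A
    rw [hP]
    simp only [Finset.mem_filter, Finset.mem_image, Finset.mem_univ, true_and]
    constructor
    · rintro ⟨⟨o, rfl⟩, hne⟩; exact ⟨o, hne, rfl⟩
    · rintro ⟨o, hne, rfl⟩; exact ⟨⟨o, rfl⟩, hne⟩
  have h2 : IsHyperMatching C P := by
    constructor
    · intro A hA
      obtain ⟨o, hne, rfl⟩ := (hPmem A).mp hA
      exact (h1 o hne).1
    · intro A hA A' hA' hAA'
      obtain ⟨o, hne, rfl⟩ := (hPmem A).mp hA
      obtain ⟨o', hne', rfl⟩ := (hPmem A').mp hA'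
      rw [Finset.disjoint_left]
      intro i hi hi'
      have e1 := (hmem o i).mp hi
      have e2 := (hmem o' i).mp hi'
      exact hAA' (by rw [← e1, e2])
  have h3 : ∀ i : Fin ℓ, ∃ A ∈ P, i ∈ A := by
    intro i
    have hi : i ∈ N (μ i) := (hmem (μ i) i).mpr rfl
    exact ⟨N (μ i), (hPmem _).mpr ⟨μ i, ⟨i, hi⟩, rfl⟩, hi⟩
  refine ⟨h1, h2, h3, ?_⟩
  -- injectivity of N on centers with nonempty groups
  have hNinj : ∀ o o' : V, (N o).Nonempty → N o = N o' → o = o' := by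
    intro o o' ⟨i, hi⟩ he
    have h1 := (hmem o i).mp hi
    have h2 := (hmem o' i).mp (he ▸ hi)
    rw [← h1, h2]
  -- P as image of N over the filtered set
  set Vne : Finset V := Finset.univ.filter (fun o => (N o).Nonempty) with hVne
  have hPimg : P = Vne.image N := by
    ext A
    rw [hPmem]
    constructor
    · rintro ⟨o, hne, rfl⟩
      exact Finset.mem_image.mpr ⟨o, Finset.mem_filter.mpr ⟨Finset.mem_univ o, hne⟩, rfl⟩
    · intro hA
      obtain ⟨o, ho, rfl⟩ := Finset.mem_image.mp hA
      exact ⟨o, (Finset.mem_filter.mp ho).2, rfl⟩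
  -- double counting lemma
  have key : ∀ A : Finset (Fin ℓ), ∑ i ∈ A, ((C i).card : ℤ) =
      ∑ v ∈ unionC C A, ((A.filter (fun i => v ∈ C i)).card : ℤ) := by
    intro A
    have step : ∀ i ∈ A, ((C i).card : ℤ) =
        ∑ v ∈ unionC C A, (if v ∈ C i then (1:ℤ) else 0) := by
      intro i hi
      rw [← Finset.sum_filter]
      have : (unionC C A).filter (fun v => v ∈ C i) = C i := by
        ext v
        simp only [Finset.mem_filter, unionC, Finset.mem_biUnion, and_iff_right_iff_imp]
        intro hv; exact ⟨i, hi, hv⟩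
      simp [this]
    rw [Finset.sum_congr rfl step, Finset.sum_comm]
    refine Finset.sum_congr rfl fun v _ => ?_
    rw [← Finset.sum_filter]
    simp
  -- per-hyperedge identity
  have perA : ∀ A : Finset (Fin ℓ),
      (∑ i ∈ A, ((C i).card - 1 : ℤ)) - score C A = ((unionC C A).card : ℤ) - 1 := by
    intro A
    have hk := key A
    simp only [score, Finset.sum_sub_distrib, Finset.sum_const, nsmul_eq_mul, mul_one]
    rw [hk]
    ring
  -- partition of indices by P
  have hbiU : P.biUnion id = Finset.univ := by
    ext i
    simp only [Finset.mem_biUnion, id, Finset.mem_univ, iff_true]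
    exact h3 i
  have hsum_part : ∀ f : Fin ℓ → ℤ, ∑ i : Fin ℓ, f i = ∑ A ∈ P, ∑ i ∈ A, f i := by
    intro f
    have hdisj : (↑P : Set (Finset (Fin ℓ))).PairwiseDisjoint id := by
      intro A hA A' hA' hAA'
      exact h2.2 A (Finset.mem_coe.mp hA) A' (Finset.mem_coe.mp hA') hAA'
    rw [← hbiU, Finset.sum_biUnion hdisj]
    rfl
  -- description of D
  have hDdesc : D = Finset.univ.biUnion
      (fun o => ((unionC C (N o)).erase o).image (fun x => (o, x))) := by
    rw [hD]
    ext ⟨a, b⟩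
    simp only [Finset.mem_biUnion, Finset.mem_univ, true_and, hT, Finset.mem_image,
      Finset.mem_erase, unionC, Finset.mem_biUnion, Prod.mk.injEq]
    constructor
    · rintro ⟨i, x, ⟨hx1, hx2⟩, rfl, rfl⟩
      exact ⟨μ i, x, ⟨hx1, i, (hmem (μ i) i).mpr rfl, hx2⟩, rfl, rfl⟩
    · rintro ⟨o, x, ⟨hx1, i, hi, hx2⟩, rfl, rfl⟩
      have : μ i = o := (hmem o i).mp hi
      exact ⟨i, x, ⟨this ▸ hx1, hx2⟩, this, rfl⟩
  have hDcard : (D.card : ℤ) = ∑ o ∈ Vne, (((unionC C (N o)).card : ℤ) - 1) := by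
    rw [hDdesc, Finset.card_biUnion]
    · push_cast
      rw [← Finset.sum_filter_add_sum_filter_not Finset.univ (fun o => (N o).Nonempty)]
      have hz : ∑ o ∈ Finset.univ.filter (fun o => ¬ (N o).Nonempty),
          ((((unionC C (N o)).erase o).image (fun x => (o, x))).card : ℤ) = 0 := by
        refine Finset.sum_eq_zero fun o ho => ?_
        have : N o = ∅ := by
          rw [Finset.mem_filter] at ho
          exact Finset.not_nonempty_iff_eq_empty.mp ho.2
        simp [this, unionC]
      rw [hz, add_zero]
      refine Finset.sum_congr rfl fun o ho => ?_
      rw [Finset.card_image_of_injective _ (fun x y h => by simpa using h)]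
      have ho' : o ∈ unionC C (N o) := by
        rw [Finset.mem_filter] at ho
        obtain ⟨i, hi⟩ := ho.2
        simp only [unionC, Finset.mem_biUnion]
        exact ⟨i, hi, ((hmem o i).mp hi) ▸ hμ i⟩
      rw [Finset.card_erase_of_mem ho']
      have : 1 ≤ (unionC C (N o)).card := Finset.card_pos.mpr ⟨o, ho'⟩
      push_cast [this]
      omega
    · intro o _ o' _ hoo'
      simp only [Function.onFun, Finset.disjoint_left]
      rintro ⟨a, b⟩ h h'
      simp only [Finset.mem_image] at h h'
      obtain ⟨x, -, hx⟩ := h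
      obtain ⟨x', -, hx'⟩ := h'
      rw [Prod.mk.injEq] at hx hx'
      exact hoo' (hx.1.trans hx'.1.symm)
  -- convert sum over Vne to sum over P
  have hVneP : ∑ o ∈ Vne, (((unionC C (N o)).card : ℤ) - 1) =
      ∑ A ∈ P, (((unionC C A).card : ℤ) - 1) := by
    rw [hPimg, Finset.sum_image]
    intro o ho o' ho' he
    rw [Finset.mem_coe, Finset.mem_filter] at ho
    exact hNinj o o' ho.2 he
  -- finish
  rw [hDcard, hVneP, hsum_part (fun i => ((C i).card - 1 : ℤ)),
    ← Finset.sum_sub_distrib]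
  exact Finset.sum_congr rfl fun A _ => (perA A).symm
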